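/- Let C ∈ ℝ^{n×n×n₃} be T-symmetric positive definite, D ∈ ℝ^{n×l×n₃}, and let X_k, R_k, P_k be the iterates of Algorithm 1 from an arbitrary initial tensor X₁ ∈ ℝ^{n×l×n₃}. If P₁,…,P_k are all nonzero (so that all iterates up to index k+1 are defined), then the residuals are mutually orthogonal and the directions are mutually C-orthogonal: ⟨R_s, R_t⟩ = 0 and ⟨C⋆P_s, P_t⟩ = 0 for all 1 ≤ s, t ≤ k+1 with s ≠ t. -/

import Mathlib

open Matrix Filter Topology

set_option linter.unusedSectionVars false

noncomputable section

/-- A third-order real tensor of size `n₁ × n₂ × n₃`, identified with the family of its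
frontal slices indexed by `ZMod n₃`. -/
abbrev Tensor (n₁ n₂ n₃ : ℕ) := ZMod n₃ → Matrix (Fin n₁) (Fin n₂) ℝ

/-- The T-product of third-order tensors: `(C ⋆ D)(k) = ∑ j, C (k - j) * D j`. -/
def tProd {n₁ n₂ l n₃ : ℕ} [NeZero n₃] (C : Tensor n₁ n₂ n₃) (D : Tensor n₂ l n₃) :
    Tensor n₁ l n₃ :=
  fun k => ∑ j : ZMod n₃, C (k - j) * D j

/-- The tensor transpose: `(Cᵀ)(k) = (C (-k))ᵀ`. -/
def tTrans {n₁ n₂ n₃ : ℕ} (C : Tensor n₁ n₂ n₃) : Tensor n₂ n₁ n₃ :=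
  fun k => (C (-k))ᵀ

/-- The matrix trace of the first frontal slice of a tensor with square slices. -/
def trFirst {m n₃ : ℕ} (S : Tensor m m n₃) : ℝ :=
  (S 0).trace

/-- The inner product `⟨C, D⟩ = ∑ k i j, C k i j * D k i j`. -/
def tInner {n₁ n₂ n₃ : ℕ} [NeZero n₃] (C D : Tensor n₁ n₂ n₃) : ℝ :=
  ∑ k : ZMod n₃, ∑ i : Fin n₁, ∑ j : Fin n₂, C k i j * D k i j

/-- The Frobenius norm `‖C‖ = √⟨C, C⟩`. -/
def tNorm {n₁ n₂ n₃ : ℕ} [NeZero n₃] (C : Tensor n₁ n₂ n₃) : ℝ :=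
  Real.sqrt (tInner C C)

/-- The block circulant matrix of a tensor: its `(k, l)` block is `C (k - l)`. -/
def bCirc {n n₃ : ℕ} [NeZero n₃] (C : Tensor n n n₃) :
    Matrix (ZMod n₃ × Fin n) (ZMod n₃ × Fin n) ℝ :=
  fun p q => C (p.1 - q.1) p.2 q.2

/-- `C` is T-symmetric positive definite: `Cᵀ = C` and `bCirc C` is positive definite. -/
def TSymPD {n n₃ : ℕ} [NeZero n₃] (C : Tensor n n n₃) : Prop :=
  tTrans C = C ∧ (bCirc C).PosDef

section Helpers

variable {n₁ n₂ l n n₃ : ℕ} [NeZero n₃]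

lemma tInner_comm (A B : Tensor n₁ n₂ n₃) : tInner A B = tInner B A := by
  simp [tInner, mul_comm]

lemma tInner_add_left (A A' B : Tensor n₁ n₂ n₃) :
    tInner (A + A') B = tInner A B + tInner A' B := by
  simp [tInner, add_mul, Finset.sum_add_distrib]

lemma tInner_smul_left (c : ℝ) (A B : Tensor n₁ n₂ n₃) :
    tInner (c • A) B = c * tInner A B := by
  simp [tInner, Finset.mul_sum, mul_assoc]

lemma tInner_smul_right (c : ℝ) (A B : Tensor n₁ n₂ n₃) :
    tInner A (c • B) = c * tInner A B := by
  rw [tInner_comm, tInner_smul_left, tInner_comm]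

lemma tInner_sub_left (A A' B : Tensor n₁ n₂ n₃) :
    tInner (A - A') B = tInner A B - tInner A' B := by
  simp [tInner, sub_mul, Finset.sum_sub_distrib]

lemma tInner_sub_right (A B B' : Tensor n₁ n₂ n₃) :
    tInner A (B - B') = tInner A B - tInner A B' := by
  simp [tInner, mul_sub, Finset.sum_sub_distrib]

lemma tInner_self_nonneg (A : Tensor n₁ n₂ n₃) : 0 ≤ tInner A A :=
  Finset.sum_nonneg fun _ _ => Finset.sum_nonneg fun _ _ =>
    Finset.sum_nonneg fun _ _ => mul_self_nonneg _

lemma tInner_self_pos {A : Tensor n₁ n₂ n₃} (hA : A ≠ 0) : 0 < tInner A A := by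
  rcases (tInner_self_nonneg A).lt_or_eq with h | h
  · exact h
  · exfalso; apply hA
    have h0 : ∀ k ∈ Finset.univ, ∀ i ∈ Finset.univ, ∀ j ∈ (Finset.univ : Finset (Fin n₂)),
        A k i j * A k i j = 0 := by
      intro k _ i _ j _
      have h1 := (Finset.sum_eq_zero_iff_of_nonneg (fun k _ => Finset.sum_nonneg fun _ _ =>
        Finset.sum_nonneg fun _ _ => mul_self_nonneg _)).mp h.symm k (Finset.mem_univ k)
      have h2 := (Finset.sum_eq_zero_iff_of_nonneg (fun i _ =>
        Finset.sum_nonneg fun _ _ => mul_self_nonneg _)).mp h1 i (Finset.mem_univ i)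
      exact (Finset.sum_eq_zero_iff_of_nonneg (fun j _ => mul_self_nonneg _)).mp h2 j
        (Finset.mem_univ j)
    funext k i j
    exact mul_self_eq_zero.mp (h0 k (Finset.mem_univ k) i (Finset.mem_univ i) j
      (Finset.mem_univ j))

lemma tProd_add (C : Tensor n₁ n₂ n₃) (x y : Tensor n₂ l n₃) :
    tProd C (x + y) = tProd C x + tProd C y := by
  funext k
  simp [tProd, Matrix.mul_add, Finset.sum_add_distrib]

lemma tProd_smul (C : Tensor n₁ n₂ n₃) (c : ℝ) (x : Tensor n₂ l n₃) :
    tProd C (c • x) = c • tProd C x := by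
  funext k
  simp [tProd, Matrix.mul_smul, Finset.smul_sum]

lemma tProd_sub (C : Tensor n₁ n₂ n₃) (x y : Tensor n₂ l n₃) :
    tProd C (x - y) = tProd C x - tProd C y := by
  funext k
  simp [tProd, Matrix.mul_sub, Finset.sum_sub_distrib]

lemma tProd_zero (C : Tensor n₁ n₂ n₃) : tProd C (0 : Tensor n₂ l n₃) = 0 := by
  funext k
  simp [tProd]

lemma tInner_zero_right (A : Tensor n₁ n₂ n₃) : tInner A 0 = 0 := by
  simp [tInner]

lemma trace_transpose_mul' (A B : Matrix (Fin n₁) (Fin n₂) ℝ) :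
    (Aᵀ * B).trace = ∑ i : Fin n₁, ∑ j : Fin n₂, A i j * B i j := by
  rw [Finset.sum_comm]
  simp [Matrix.trace, Matrix.diag, Matrix.mul_apply]

lemma tInner_eq_trace (A B : Tensor n₁ n₂ n₃) :
    tInner A B = ∑ k : ZMod n₃, ((A k)ᵀ * B k).trace := by
  simp [tInner, trace_transpose_mul']

lemma trFirst_eq (A B : Tensor n₁ n₂ n₃) :
    trFirst (tProd (tTrans A) B) = tInner A B := by
  unfold trFirst tProd
  rw [Matrix.trace_sum, tInner_eq_trace]
  refine Finset.sum_congr rfl fun j _ => ?_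
  have : tTrans A (0 - j) = (A j)ᵀ := by simp [tTrans]
  rw [this]

lemma sum_comm₃ {α β γ : Type*} [Fintype α] [Fintype β] [Fintype γ] (f : α → β → γ → ℝ) :
    ∑ a : α, ∑ b : β, ∑ c : γ, f a b c = ∑ c : γ, ∑ a : α, ∑ b : β, f a b c := by
  calc ∑ a : α, ∑ b : β, ∑ c : γ, f a b c
      = ∑ a : α, ∑ c : γ, ∑ b : β, f a b c :=
        Finset.sum_congr rfl fun a _ => Finset.sum_comm
    _ = ∑ c : γ, ∑ a : α, ∑ b : β, f a b c := Finset.sum_comm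

lemma tTrans_slice {C : Tensor n n n₃} (hCs : tTrans C = C) (a b : ZMod n₃) (i i' : Fin n) :
    C (a - b) i i' = C (b - a) i' i := by
  conv_rhs => rw [← hCs]
  simp [tTrans, neg_sub]

lemma tInner_tProd_left {C : Tensor n n n₃} (hCs : tTrans C = C) (x y : Tensor n l n₃) :
    tInner (tProd C x) y = tInner x (tProd C y) := by
  have hCT : ∀ a b : ZMod n₃, (C (a - b))ᵀ = C (b - a) := by
    intro a b
    ext i i'
    simp [Matrix.transpose_apply, tTrans_slice hCs]
  calc tInner (tProd C x) y
      = ∑ k : ZMod n₃, ((tProd C x k)ᵀ * y k).trace := tInner_eq_trace _ _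
    _ = ∑ k : ZMod n₃, ∑ j : ZMod n₃, ((x j)ᵀ * (C (j - k) * y k)).trace := by
        refine Finset.sum_congr rfl fun k _ => ?_
        simp only [tProd, Matrix.transpose_sum, Matrix.transpose_mul]
        rw [Matrix.sum_mul, Matrix.trace_sum]
        apply Finset.sum_congr rfl
        intro j _
        rw [Matrix.mul_assoc, hCT]
    _ = ∑ j : ZMod n₃, ∑ k : ZMod n₃, ((x j)ᵀ * (C (j - k) * y k)).trace := Finset.sum_comm
    _ = tInner x (tProd C y) := by
        rw [tInner_eq_trace]
        refine Finset.sum_congr rfl fun j _ => ?_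
        simp [tProd, Matrix.mul_sum, Matrix.trace_sum]

lemma tInner_tProd_self_pos {C : Tensor n n n₃} (hC : (bCirc C).PosDef)
    {x : Tensor n l n₃} (hx : x ≠ 0) : 0 < tInner x (tProd C x) := by
  have key : tInner x (tProd C x) = ∑ c : Fin l,
      ((fun p : ZMod n₃ × Fin n => x p.1 p.2 c) ⬝ᵥ
        (bCirc C *ᵥ (fun p : ZMod n₃ × Fin n => x p.1 p.2 c))) := by
    have h1 : tInner x (tProd C x) = ∑ k : ZMod n₃, ∑ i : Fin n, ∑ c : Fin l,
        x k i c * ∑ j : ZMod n₃, ∑ i' : Fin n, C (k - j) i i' * x j i' c := by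
      simp [tInner, tProd, Matrix.sum_apply, Matrix.mul_apply]
    rw [h1, sum_comm₃]
    simp [dotProduct, mulVec, bCirc, Fintype.sum_prod_type]
  rw [key]
  have hex : ∃ k i c, x k i c ≠ 0 := by
    by_contra h
    push_neg at h
    exact hx (funext fun k => Matrix.ext fun i c => h k i c)
  obtain ⟨k, i, c, hkic⟩ := hex
  have hv : (fun p : ZMod n₃ × Fin n => x p.1 p.2 c) ≠ 0 := by
    intro h
    exact hkic (congrFun h (k, i))
  refine Finset.sum_pos' (fun c' _ => ?_) ⟨c, Finset.mem_univ c, ?_⟩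
  · by_cases h : (fun p : ZMod n₃ × Fin n => x p.1 p.2 c') = 0
    · rw [h]; simp
    · simpa using (hC.dotProduct_mulVec_pos h).le
  · simpa using hC.dotProduct_mulVec_pos hv

lemma cg_invariant {C : Tensor n n n₃} (hC : TSymPD C)
    (R P : ℕ → Tensor n l n₃)
    (hRrec : ∀ i, 1 ≤ i → R (i + 1) = R i -
      (tInner (P i) (R i) / tInner (P i) (tProd C (P i))) • tProd C (P i))
    (hP1 : P 1 = R 1)
    (hPrec : ∀ i, 1 ≤ i → P (i + 1) = R (i + 1) -
      (tInner (P i) (tProd C (R (i + 1))) / tInner (P i) (tProd C (P i))) • P i)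
    (k : ℕ) (hPne : ∀ i, 1 ≤ i → i ≤ k → P i ≠ 0) :
    (∀ s t, 1 ≤ s → s < t → t ≤ k + 1 →
        tInner (R s) (R t) = 0 ∧ tInner (P s) (tProd C (P t)) = 0 ∧ tInner (P s) (R t) = 0)
    ∧ ∀ i, 1 ≤ i → i ≤ k + 1 → tInner (P i) (R i) = tInner (R i) (R i) := by
  revert hPne
  induction k with
  | zero =>
    intro hPne
    constructor
    · intro s t hs hst ht; omega
    · intro i h1 h2
      have hi : i = 1 := by omega
      subst hi
      rw [hP1]
  | succ k ih =>
    intro hPne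
    obtain ⟨orth, aux⟩ := ih (fun i h1 h2 => hPne i h1 (by omega))
    have dpos : ∀ i, P i ≠ 0 → 0 < tInner (P i) (tProd C (P i)) :=
      fun i hi => tInner_tProd_self_pos hC.2 hi
    have hPK1 : P (k + 1) ≠ 0 := hPne (k + 1) (by omega) le_rfl
    have dK1 : 0 < tInner (P (k + 1)) (tProd C (P (k + 1))) := dpos _ hPK1
    -- residuals below k are nonzero
    have hRne : ∀ s, 1 ≤ s → s ≤ k → R s ≠ 0 := by
      intro s h1 h2 hR0
      rcases Nat.lt_or_ge 1 s with hs2 | hs2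
      · obtain ⟨m, rfl⟩ : ∃ m, s = m + 1 := ⟨s - 1, by omega⟩
        have hm1 : 1 ≤ m := by omega
        have hPs := hPrec m hm1
        rw [hR0] at hPs
        simp only [tProd_zero, tInner_zero_right, zero_div, zero_smul, zero_sub,
          neg_zero] at hPs
        exact hPne (m + 1) (by omega) (by omega) hPs
      · have hs1 : s = 1 := by omega
        subst hs1
        exact hPne 1 le_rfl (by omega) (hP1.trans hR0)
    have hr2 := hRrec (k + 1) (by omega)
    have hauxK1 : tInner (P (k + 1)) (R (k + 1)) = tInner (R (k + 1)) (R (k + 1)) :=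
      aux (k + 1) (by omega) (by omega)
    -- ⟨R s, C P (k+1)⟩ = 0 for s ≤ k
    have E : ∀ s, 1 ≤ s → s ≤ k → tInner (R s) (tProd C (P (k + 1))) = 0 := by
      intro s h1 h2
      rcases Nat.lt_or_ge 1 s with hs2 | hs2
      · obtain ⟨m, rfl⟩ : ∃ m, s = m + 1 := ⟨s - 1, by omega⟩
        have hm1 : 1 ≤ m := by omega
        have hRs : R (m + 1) = P (m + 1) +
            (tInner (P m) (tProd C (R (m + 1))) / tInner (P m) (tProd C (P m))) • P m := by
          rw [hPrec m hm1]; abel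
        rw [hRs, tInner_add_left, tInner_smul_left,
          (orth (m + 1) (k + 1) (by omega) (by omega) (by omega)).2.1,
          (orth m (k + 1) hm1 (by omega) (by omega)).2.1]
        ring
      · have hs1 : s = 1 := by omega
        subst hs1
        rw [← hP1]
        exact (orth 1 (k + 1) le_rfl (by omega) (by omega)).2.1
    -- ⟨R (k+1), C P (k+1)⟩ = ⟨P (k+1), C P (k+1)⟩
    have EK1 : tInner (R (k + 1)) (tProd C (P (k + 1))) =
        tInner (P (k + 1)) (tProd C (P (k + 1))) := by
      rcases Nat.eq_zero_or_pos k with hk0 | hk1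
      · subst hk0
        rw [← hP1]
      · have hRs : R (k + 1) = P (k + 1) +
            (tInner (P k) (tProd C (R (k + 1))) / tInner (P k) (tProd C (P k))) • P k := by
          rw [hPrec k hk1]; abel
        rw [hRs, tInner_add_left, tInner_smul_left,
          (orth k (k + 1) hk1 (by omega) (by omega)).2.1]
        ring
    -- A : residual orthogonality with R (k+2)
    have A : ∀ s, 1 ≤ s → s ≤ k + 1 → tInner (R s) (R (k + 1 + 1)) = 0 := by
      intro s h1 h2
      rw [hr2, tInner_sub_right, tInner_smul_right]
      rcases Nat.lt_or_ge s (k + 1) with hs | hs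
      · rw [(orth s (k + 1) h1 hs (by omega)).1, E s h1 (by omega)]
        ring
      · have hs1 : s = k + 1 := by omega
        subst hs1
        rw [EK1, hauxK1, div_mul_cancel₀ _ dK1.ne', sub_self]
    -- B : direction-residual orthogonality with R (k+2)
    have B : ∀ s, 1 ≤ s → s ≤ k + 1 → tInner (P s) (R (k + 1 + 1)) = 0 := by
      intro s h1 h2
      rw [hr2, tInner_sub_right, tInner_smul_right]
      rcases Nat.lt_or_ge s (k + 1) with hs | hs
      · rw [(orth s (k + 1) h1 hs (by omega)).2.2, (orth s (k + 1) h1 hs (by omega)).2.1]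
        ring
      · have hs1 : s = k + 1 := by omega
        subst hs1
        rw [div_mul_cancel₀ _ dK1.ne', sub_self]
    have hp2 := hPrec (k + 1) (by omega)
    -- Cstep : conjugacy with P (k+2)
    have Cstep : ∀ s, 1 ≤ s → s ≤ k + 1 → tInner (P s) (tProd C (P (k + 1 + 1))) = 0 := by
      intro s h1 h2
      rw [hp2, tProd_sub, tProd_smul, tInner_sub_right, tInner_smul_right]
      rcases Nat.lt_or_ge s (k + 1) with hs | hs
      · rw [(orth s (k + 1) h1 hs (by omega)).2.1]
        have hfirst : tInner (P s) (tProd C (R (k + 1 + 1))) = 0 := by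
          rw [← tInner_tProd_left hC.1]
          have hds : 0 < tInner (P s) (tProd C (P s)) := dpos s (hPne s h1 (by omega))
          have hts : 0 < tInner (P s) (R s) / tInner (P s) (tProd C (P s)) := by
            rw [aux s h1 (by omega)]
            exact div_pos (tInner_self_pos (hRne s h1 (by omega))) hds
          have hsm : (tInner (P s) (R s) / tInner (P s) (tProd C (P s))) • tProd C (P s)
              = R s - R (s + 1) := by
            rw [hRrec s h1]; abel
          have hkey : (tInner (P s) (R s) / tInner (P s) (tProd C (P s))) *
              tInner (tProd C (P s)) (R (k + 1 + 1)) = 0 := by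
            rw [← tInner_smul_left, hsm, tInner_sub_left, A s h1 (by omega),
              A (s + 1) (by omega) (by omega), sub_self]
          rcases mul_eq_zero.mp hkey with h | h
          · exact absurd h hts.ne'
          · exact h
        rw [hfirst]
        ring
      · have hs1 : s = k + 1 := by omega
        subst hs1
        rw [div_mul_cancel₀ _ dK1.ne', sub_self]
    -- D : new auxiliary identity
    have Dnew : tInner (P (k + 1 + 1)) (R (k + 1 + 1)) =
        tInner (R (k + 1 + 1)) (R (k + 1 + 1)) := by
      rw [hp2, tInner_sub_left, tInner_smul_left, B (k + 1) (by omega) le_rfl]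
      ring
    constructor
    · intro s t hs hst ht
      rcases Nat.lt_or_ge t (k + 1 + 1) with h | h
      · exact orth s t hs hst (by omega)
      · have ht2 : t = k + 1 + 1 := by omega
        subst ht2
        exact ⟨A s hs (by omega), Cstep s hs (by omega), B s hs (by omega)⟩
    · intro i h1 h2
      rcases Nat.lt_or_ge i (k + 1 + 1) with h | h
      · exact aux i h1 (by omega)
      · have hi2 : i = k + 1 + 1 := by omega
        subst hi2
        exact Dnew

end Helpers

theorem stmt_5 (n l n₃ : ℕ) [NeZero n₃] (C : Tensor n n n₃) (hC : TSymPD C)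
    (D : Tensor n l n₃)
    (X R P : ℕ → Tensor n l n₃)
    (hR : ∀ i, 1 ≤ i → R i = D - tProd C (X i))
    (hP1 : P 1 = R 1)
    (hX : ∀ i, 1 ≤ i → X (i + 1) = X i +
      (trFirst (tProd (tTrans (P i)) (R i)) /
        trFirst (tProd (tTrans (P i)) (tProd C (P i)))) • P i)
    (hP : ∀ i, 1 ≤ i → P (i + 1) = R (i + 1) -
      (trFirst (tProd (tTrans (P i)) (tProd C (R (i + 1)))) /
        trFirst (tProd (tTrans (P i)) (tProd C (P i)))) • P i)
    (k : ℕ) (hPne : ∀ i, 1 ≤ i → i ≤ k → P i ≠ 0) :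
    ∀ s t, 1 ≤ s → s ≤ k + 1 → 1 ≤ t → t ≤ k + 1 → s ≠ t →
      tInner (R s) (R t) = 0 ∧ tInner (tProd C (P s)) (P t) = 0 := by
  have hRrec : ∀ i, 1 ≤ i → R (i + 1) = R i -
      (tInner (P i) (R i) / tInner (P i) (tProd C (P i))) • tProd C (P i) := by
    intro i hi
    have h1 := hR (i + 1) (by omega)
    rw [hX i hi, tProd_add, tProd_smul] at h1
    rw [h1, hR i hi, trFirst_eq, trFirst_eq]
    abel
  have hPrec : ∀ i, 1 ≤ i → P (i + 1) = R (i + 1) -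
      (tInner (P i) (tProd C (R (i + 1))) / tInner (P i) (tProd C (P i))) • P i := by
    intro i hi
    rw [hP i hi, trFirst_eq, trFirst_eq]
  obtain ⟨orth, _⟩ := cg_invariant hC R P hRrec hP1 hPrec k hPne
  intro s t hs hsk ht htk hst
  rcases lt_or_gt_of_ne hst with h | h
  · refine ⟨(orth s t hs h htk).1, ?_⟩
    rw [tInner_tProd_left hC.1]
    exact (orth s t hs h htk).2.1
  · refine ⟨by rw [tInner_comm]; exact (orth t s ht h hsk).1, ?_⟩
    rw [tInner_comm]
    exact (orth t s ht h hsk).2.1
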